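/- Let n ≥ 1, r ≥ 1 and let q = x_0^2 + x_1^2 + ⋯ + x_{n-2}^2 + x_{n-1}·x_n ∈ ℂ[x_0,…,x_n]. For every d with 1 ≤ d ≤ r and every homogeneous polynomial g ∈ ℂ[y_0,…,y_n] of degree d, if g(∂)(q^r) = 0 then g = 0. Equivalently, the apolar ideal (q^r)^⊥ contains no nonzero form of degree at most r, and the family (∂^α(q^r)) indexed by multi-indices α with |α| = d is linearly independent over ℂ for every d ≤ r. -/

import Mathlib

open MvPolynomial

/-- Iterated partial derivative `∂^α f`: `MvPolynomial.pderiv i` is applied `α i` times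
for each variable `i`. -/
noncomputable def pdPow {n : ℕ} (α : Fin n →₀ ℕ) (f : MvPolynomial (Fin n) ℂ) :
    MvPolynomial (Fin n) ℂ :=
  (List.finRange n).foldr (fun i g => (fun h => MvPolynomial.pderiv i h)^[α i] g) f

/-- `g(∂)f`: the polynomial differential operator associated to `g` applied to `f`. -/
noncomputable def apolarAct {n : ℕ} (g f : MvPolynomial (Fin n) ℂ) :
    MvPolynomial (Fin n) ℂ :=
  (AddMonoidAlgebra.coeff g).sum fun α c => c • pdPow α f

/-- The quadric `q = x_0^2 + ⋯ + x_{n-2}^2 + x_{n-1}·x_n` in `ℂ[x_0,…,x_n]`. -/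
noncomputable def qForm (n : ℕ) : MvPolynomial (Fin (n + 1)) ℂ :=
  (∑ i ∈ Finset.univ.filter (fun i : Fin (n + 1) => (i : ℕ) + 2 ≤ n), X i ^ 2)
    + X (⟨n - 1, by omega⟩ : Fin (n + 1)) * X (⟨n, by omega⟩ : Fin (n + 1))

open Function
abbrev MvC (n : ℕ) := MvPolynomial (Fin n) ℂ
variable {n : ℕ}


variable {n : ℕ}

lemma pderiv_pderiv_X (i j k : Fin n) :
    pderiv i (pderiv j (X k : MvPolynomial (Fin n) ℂ)) = 0 := by
  rcases eq_or_ne k j with rfl | h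
  · simp
  · simp [h]

lemma pderiv_comm' (i j : Fin n) (f : MvPolynomial (Fin n) ℂ) :
    pderiv i (pderiv j f) = pderiv j (pderiv i f) := by
  induction f using MvPolynomial.induction_on with
  | C a => simp [pderiv_C]
  | add p q hp hq => simp [hp, hq]
  | mul_X p k h =>
    simp only [pderiv_mul, map_add, h, pderiv_pderiv_X, mul_zero, add_zero]
    ring


variable {n : ℕ}


lemma it_add (i : Fin n) (k : ℕ) (f g : MvC n) :
    (fun h => pderiv i h)^[k] (f + g)
      = (fun h => pderiv i h)^[k] f + (fun h => pderiv i h)^[k] g := by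
  induction k generalizing f g with
  | zero => rfl
  | succ k ih => simp only [iterate_succ_apply, map_add, ih]

lemma it_smul (i : Fin n) (k : ℕ) (c : ℂ) (f : MvC n) :
    (fun h => pderiv i h)^[k] (c • f) = c • (fun h => pderiv i h)^[k] f := by
  induction k generalizing f with
  | zero => rfl
  | succ k ih => simp only [iterate_succ_apply, Derivation.map_smul, ih]

lemma it_pderiv (i j : Fin n) (k : ℕ) (f : MvC n) :
    pderiv j ((fun h => pderiv i h)^[k] f) = (fun h => pderiv i h)^[k] (pderiv j f) := by
  induction k generalizing f with
  | zero => rfl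
  | succ k ih => rw [iterate_succ_apply, iterate_succ_apply, ih, pderiv_comm' j i]

lemma it_X_mul_ne {i j : Fin n} (h : i ≠ j) (k : ℕ) (f : MvC n) :
    (fun h => pderiv i h)^[k] (X j * f) = X j * (fun h => pderiv i h)^[k] f := by
  induction k generalizing f with
  | zero => rfl
  | succ k ih =>
    rw [iterate_succ_apply, iterate_succ_apply, pderiv_mul, pderiv_X_of_ne h.symm,
      zero_mul, zero_add, ih]

lemma it_X_mul_self (i : Fin n) (k : ℕ) (f : MvC n) :
    (fun h => pderiv i h)^[k + 1] (X i * f)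
      = X i * (fun h => pderiv i h)^[k + 1] f
        + ((k + 1 : ℕ) : ℂ) • (fun h => pderiv i h)^[k] f := by
  induction k generalizing f with
  | zero =>
    simp only [iterate_succ_apply, iterate_zero, id_eq, pderiv_mul, pderiv_X_self, one_mul,
      Nat.cast_one, one_smul]
    rw [add_comm, Nat.cast_one, one_smul]
  | succ k ih =>
    rw [show k+1+1 = (k+1)+1 from rfl, iterate_succ_apply _ (k+1) (X i * f), iterate_succ_apply _ (k+1) f, pderiv_mul, pderiv_X_self,
      one_mul, it_add, ih]
    simp only [← iterate_succ_apply]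
    push_cast
    module

/-- foldr over an arbitrary list of variables. -/
noncomputable def pdList (l : List (Fin n)) (α : Fin n →₀ ℕ) (f : MvC n) : MvC n :=
  l.foldr (fun i g => (fun h => MvPolynomial.pderiv i h)^[α i] g) f

lemma pdPow_eq_pdList (α : Fin n →₀ ℕ) (f : MvC n) :
    pdPow α f = pdList (List.finRange n) α f := rfl

lemma pdList_nil (α : Fin n →₀ ℕ) (f : MvC n) : pdList [] α f = f := rfl

lemma pdList_cons (i : Fin n) (tl : List (Fin n)) (α : Fin n →₀ ℕ) (f : MvC n) :
    pdList (i :: tl) α f = (fun h => pderiv i h)^[α i] (pdList tl α f) := rfl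

lemma pdList_add (l : List (Fin n)) (α : Fin n →₀ ℕ) (f g : MvC n) :
    pdList l α (f + g) = pdList l α f + pdList l α g := by
  induction l generalizing f g with
  | nil => rfl
  | cons i tl ih => rw [pdList_cons, pdList_cons, pdList_cons, ih, it_add]

lemma pdList_smul (l : List (Fin n)) (α : Fin n →₀ ℕ) (c : ℂ) (f : MvC n) :
    pdList l α (c • f) = c • pdList l α f := by
  induction l generalizing f with
  | nil => rfl
  | cons i tl ih => rw [pdList_cons, pdList_cons, ih, it_smul]

lemma pdList_pderiv (l : List (Fin n)) (α : Fin n →₀ ℕ) (j : Fin n) (f : MvC n) :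
    pderiv j (pdList l α f) = pdList l α (pderiv j f) := by
  induction l generalizing f with
  | nil => rfl
  | cons i tl ih => rw [pdList_cons, pdList_cons, it_pderiv, ih]

lemma pdList_congr (l : List (Fin n)) {α β : Fin n →₀ ℕ} (h : ∀ i ∈ l, α i = β i)
    (f : MvC n) : pdList l α f = pdList l β f := by
  induction l generalizing f with
  | nil => rfl
  | cons i tl ih =>
    rw [pdList_cons, pdList_cons, h i List.mem_cons_self,
      ih (fun x hx => h x (List.mem_cons_of_mem _ hx))]

lemma pdList_X_mul_notMem {l : List (Fin n)} {j : Fin n} (hj : j ∉ l) (α : Fin n →₀ ℕ)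
    (f : MvC n) : pdList l α (X j * f) = X j * pdList l α f := by
  induction l generalizing f with
  | nil => rfl
  | cons i tl ih =>
    have hij : i ≠ j := by rintro rfl; exact hj List.mem_cons_self
    rw [pdList_cons, pdList_cons, ih (fun h => hj (List.mem_cons_of_mem _ h)),
      it_X_mul_ne hij]

lemma pdList_X_mul {l : List (Fin n)} (hl : l.Nodup) {j : Fin n} (hj : j ∈ l)
    (α : Fin n →₀ ℕ) (f : MvC n) :
    pdList l α (X j * f)
      = X j * pdList l α f + ((α j : ℕ) : ℂ) • pdList l (α - Finsupp.single j 1) f := by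
  induction l generalizing f with
  | nil => simp at hj
  | cons i tl ih =>
    have hnd := List.nodup_cons.mp hl
    rcases List.mem_cons.mp hj with rfl | hmem
    · -- j = i, j ∉ tl
      rw [pdList_cons, pdList_cons, pdList_cons, pdList_X_mul_notMem hnd.1]
      have htl : pdList tl (α - Finsupp.single j 1) f = pdList tl α f := by
        refine pdList_congr tl (fun x hx => ?_) f
        have hx' : x ≠ j := by rintro rfl; exact hnd.1 hx
        simp [Finsupp.tsub_apply, Finsupp.single_apply, hx'.symm]
      have hαj : ((α - Finsupp.single j 1 : Fin n →₀ ℕ)) j = α j - 1 := by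
        simp [Finsupp.tsub_apply]
      rw [htl, hαj]
      rcases Nat.eq_zero_or_eq_succ_pred (α j) with h0 | hsucc
      · rw [h0]; simp
      · rw [hsucc, it_X_mul_self]
        simp
    · -- j ∈ tl, i ≠ j
      have hij : i ≠ j := by rintro rfl; exact hnd.1 hmem
      rw [pdList_cons, pdList_cons, pdList_cons, ih hnd.2 hmem, it_add, it_smul,
        it_X_mul_ne hij]
      have : ((α - Finsupp.single j 1 : Fin n →₀ ℕ)) i = α i := by
        simp [Finsupp.tsub_apply, Finsupp.single_apply, hij.symm]
      rw [this]

lemma pdPow_add (α : Fin n →₀ ℕ) (f g : MvC n) :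
    pdPow α (f + g) = pdPow α f + pdPow α g := by
  rw [pdPow_eq_pdList, pdPow_eq_pdList, pdPow_eq_pdList, pdList_add]

lemma pdPow_smul (α : Fin n →₀ ℕ) (c : ℂ) (f : MvC n) :
    pdPow α (c • f) = c • pdPow α f := by
  rw [pdPow_eq_pdList, pdPow_eq_pdList, pdList_smul]

lemma pdPow_pderiv (α : Fin n →₀ ℕ) (j : Fin n) (f : MvC n) :
    pderiv j (pdPow α f) = pdPow α (pderiv j f) := by
  rw [pdPow_eq_pdList, pdPow_eq_pdList, pdList_pderiv]

lemma pdPow_X_mul (α : Fin n →₀ ℕ) (j : Fin n) (f : MvC n) :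
    pdPow α (X j * f)
      = X j * pdPow α f + ((α j : ℕ) : ℂ) • pdPow (α - Finsupp.single j 1) f := by
  rw [pdPow_eq_pdList, pdPow_eq_pdList, pdPow_eq_pdList,
    pdList_X_mul (List.nodup_finRange n) (List.mem_finRange j)]

lemma pdPow_zero (f : MvC n) : pdPow (0 : Fin n →₀ ℕ) f = f := by
  rw [pdPow_eq_pdList]
  induction (List.finRange n) with
  | nil => rfl
  | cons i tl ih => rw [pdList_cons]; simp [ih]

-- apolarAct lemmas
lemma apolarAct_monomial (s : Fin n →₀ ℕ) (c : ℂ) (f : MvC n) :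
    apolarAct (monomial s c) f = c • pdPow s f := by
  rw [apolarAct, ← single_eq_monomial, AddMonoidAlgebra.coeff_single]
  exact Finsupp.sum_single_index (by simp)

lemma apolarAct_C (c : ℂ) (f : MvC n) : apolarAct (C c) f = c • f := by
  rw [C_apply, apolarAct_monomial, pdPow_zero]

lemma apolarAct_add_left (g h f : MvC n) :
    apolarAct (g + h) f = apolarAct g f + apolarAct h f := by
  unfold apolarAct
  rw [AddMonoidAlgebra.coeff_add]
  exact Finsupp.sum_add_index' (by simp) (fun a b₁ b₂ => add_smul b₁ b₂ _)

lemma apolarAct_sum_left {ι : Type*} (s : Finset ι) (G : ι → MvC n) (f : MvC n) :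
    apolarAct (∑ x ∈ s, G x) f = ∑ x ∈ s, apolarAct (G x) f := by
  induction s using Finset.cons_induction with
  | empty => simp [apolarAct]
  | cons a s ha ih => rw [Finset.sum_cons, Finset.sum_cons, apolarAct_add_left, ih]

lemma apolarAct_add_right (g f₁ f₂ : MvC n) :
    apolarAct g (f₁ + f₂) = apolarAct g f₁ + apolarAct g f₂ := by
  unfold apolarAct Finsupp.sum
  rw [← Finset.sum_add_distrib]
  exact Finset.sum_congr rfl fun α _ => by simp only [pdPow_add, smul_add]

lemma apolarAct_smul_right (g : MvC n) (c : ℂ) (f : MvC n) :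
    apolarAct g (c • f) = c • apolarAct g f := by
  unfold apolarAct Finsupp.sum
  rw [Finset.smul_sum]
  refine Finset.sum_congr rfl fun α _ => ?_
  simp only [pdPow_smul]
  rw [smul_comm]

lemma pdPow_zero_right (α : Fin n →₀ ℕ) : pdPow α (0 : MvC n) = 0 := by
  have := pdPow_smul α 0 (0 : MvC n)
  simpa using this

lemma apolarAct_zero_right (g : MvC n) : apolarAct g (0 : MvC n) = 0 := by
  unfold apolarAct
  rw [show (fun (α : Fin n →₀ ℕ) (c : ℂ) => c • pdPow α (0 : MvC n))
      = fun _ _ => (0 : MvC n) from ?_, Finsupp.sum, Finset.sum_const_zero]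
  funext α c
  rw [pdPow_zero_right, smul_zero]

lemma apolarAct_sum_right {ι : Type*} (g : MvC n) (s : Finset ι) (F : ι → MvC n) :
    apolarAct g (∑ x ∈ s, F x) = ∑ x ∈ s, apolarAct g (F x) := by
  induction s using Finset.cons_induction with
  | empty => simp only [Finset.sum_empty, apolarAct_zero_right]
  | cons a s ha ih => rw [Finset.sum_cons, Finset.sum_cons, apolarAct_add_right, ih]

lemma apolarAct_pderiv (g : MvC n) (j : Fin n) (f : MvC n) :
    pderiv j (apolarAct g f) = apolarAct g (pderiv j f) := by
  unfold apolarAct Finsupp.sum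
  rw [map_sum]
  exact Finset.sum_congr rfl fun α _ => by
    simp only [Derivation.map_smul, pdPow_pderiv]

lemma apolarAct_X_mul (g : MvC n) (j : Fin n) (f : MvC n) :
    apolarAct g (X j * f) = X j * apolarAct g f + apolarAct (pderiv j g) f := by
  have hg : apolarAct (pderiv j g) f
      = ∑ α ∈ g.support, ((coeff α g) * (α j : ℕ)) • pdPow (α - Finsupp.single j 1) f := by
    conv_lhs => rw [g.as_sum]
    rw [map_sum, apolarAct_sum_left]
    exact Finset.sum_congr rfl fun α _ => by
      rw [pderiv_monomial, apolarAct_monomial]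
  rw [hg]
  have hL : apolarAct g (X j * f)
      = ∑ α ∈ g.support, ((coeff α g) • (X j * pdPow α f)
          + ((coeff α g) * (α j : ℕ)) • pdPow (α - Finsupp.single j 1) f) := by
    unfold apolarAct Finsupp.sum
    refine Finset.sum_congr rfl fun α _ => ?_
    simp only [pdPow_X_mul, smul_add, smul_smul]
    rfl
  have hR : X j * apolarAct g f = ∑ α ∈ g.support, (coeff α g) • (X j * pdPow α f) := by
    unfold apolarAct Finsupp.sum
    rw [Finset.mul_sum]
    refine Finset.sum_congr rfl fun α _ => ?_
    simp only [mul_smul_comm]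
    rfl
  rw [hL, hR, Finset.sum_add_distrib]
-- abbreviations for the quadric
noncomputable def filt (n : ℕ) : Finset (Fin (n + 1)) :=
  Finset.univ.filter (fun i : Fin (n + 1) => (i : ℕ) + 2 ≤ n)

def uI (n : ℕ) : Fin (n + 1) := ⟨n - 1, by omega⟩
def vI (n : ℕ) : Fin (n + 1) := ⟨n, by omega⟩

lemma qForm_eq (n : ℕ) :
    qForm n = (∑ i ∈ filt n, X i ^ 2) + X (uI n) * X (vI n) := rfl

lemma mem_filt {n : ℕ} {i : Fin (n + 1)} (h : i ∈ filt n) : (i : ℕ) + 2 ≤ n := by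
  simpa [filt] using h

lemma filt_ne_u {n : ℕ} {i : Fin (n + 1)} (h : i ∈ filt n) : i ≠ uI n := by
  have := mem_filt h
  exact Fin.ne_of_val_ne (by simp [uI]; omega)

lemma filt_ne_v {n : ℕ} {i : Fin (n + 1)} (h : i ∈ filt n) : i ≠ vI n := by
  have := mem_filt h
  exact Fin.ne_of_val_ne (by simp [vI]; omega)

lemma uI_ne_vI {n : ℕ} (hn : 1 ≤ n) : uI n ≠ vI n :=
  Fin.ne_of_val_ne (by simp [uI, vI]; omega)

lemma pderiv_qForm_sq {n : ℕ} {i : Fin (n + 1)} (h : i ∈ filt n) :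
    pderiv i (qForm n) = C 2 * X i := by
  rw [qForm_eq, map_add, map_sum, pderiv_mul,
    pderiv_X_of_ne (filt_ne_u h).symm, pderiv_X_of_ne (filt_ne_v h).symm,
    Finset.sum_eq_single i (fun j _ hji => by rw [pderiv_pow, pderiv_X_of_ne hji]; ring)
      (fun hi => absurd h hi)]
  rw [pderiv_pow, pderiv_X_self, show (C 2 : MvC (n+1)) = 2 from by simp [map_ofNat]]
  push_cast
  ring

lemma pderiv_qForm_u {n : ℕ} (hn : 1 ≤ n) :
    pderiv (uI n) (qForm n) = X (vI n) := by
  rw [qForm_eq, map_add, map_sum, pderiv_mul, pderiv_X_self,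
    pderiv_X_of_ne (uI_ne_vI hn).symm,
    Finset.sum_eq_zero (fun j hj => by
      rw [pderiv_pow, pderiv_X_of_ne (filt_ne_u hj)]; ring)]
  ring

lemma pderiv_qForm_v {n : ℕ} (hn : 1 ≤ n) :
    pderiv (vI n) (qForm n) = X (uI n) := by
  rw [qForm_eq, map_add, map_sum, pderiv_mul, pderiv_X_self,
    pderiv_X_of_ne (uI_ne_vI hn),
    Finset.sum_eq_zero (fun j hj => by
      rw [pderiv_pow, pderiv_X_of_ne (filt_ne_v hj)]; ring)]
  ring

lemma q_pow_ne_zero {n : ℕ} (hn : 1 ≤ n) (r : ℕ) : qForm n ^ r ≠ 0 := by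
  intro h
  have : eval (fun i : Fin (n + 1) => if n - 1 ≤ (i : ℕ) then (1 : ℂ) else 0)
      (qForm n ^ r) = 0 := by rw [h, map_zero]
  rw [map_pow, qForm_eq, map_add, map_sum, map_mul, eval_X, eval_X] at this
  have hu : (if n - 1 ≤ ((uI n : Fin (n+1)) : ℕ) then (1 : ℂ) else 0) = 1 := by
    simp [uI]
  have hv : (if n - 1 ≤ ((vI n : Fin (n+1)) : ℕ) then (1 : ℂ) else 0) = 1 := by
    simp only [vI]
    exact if_pos (by omega)
  rw [hu, hv, Finset.sum_eq_zero (fun j hj => by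
    have := mem_filt hj
    rw [map_pow, eval_X, if_neg (by omega)]; ring)] at this
  simp at this
lemma dd_q {n : ℕ} (a b : Fin (n + 1)) (lb : MvC (n + 1))
    (hb : pderiv b (qForm n) = lb) (k : ℕ) :
    pderiv a (pderiv b (qForm n ^ (k + 1)))
      = C ((k + 1 : ℕ) : ℂ) * (pderiv a (qForm n ^ k) * lb + qForm n ^ k * pderiv a lb) := by
  rw [pderiv_pow, hb]
  have : ((k + 1 : ℕ) : MvC (n + 1)) * qForm n ^ (k + 1 - 1) * lb
      = C ((k + 1 : ℕ) : ℂ) * (qForm n ^ k * lb) := by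
    rw [map_natCast C (k+1)]
    push_cast
    ring
  rw [this, pderiv_C_mul, pderiv_mul]

lemma sum_sq_filt (n : ℕ) :
    (∑ i ∈ filt n, (X i : MvC (n + 1)) ^ 2) = qForm n - X (uI n) * X (vI n) := by
  rw [qForm_eq]; ring

lemma delta_q {n : ℕ} (hn : 1 ≤ n) (k : ℕ) :
    ∃ m : ℕ, 0 < m ∧
      (∑ i ∈ filt n, pderiv i (pderiv i (qForm n ^ (k + 1))))
          + (4 : ℂ) • pderiv (uI n) (pderiv (vI n) (qForm n ^ (k + 1)))
        = ((m : ℕ) : ℂ) • qForm n ^ k := by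
  refine ⟨(k + 1) * (4 * k + 2 * (filt n).card + 4), by positivity, ?_⟩
  have huv : pderiv (uI n) (pderiv (vI n) (qForm n ^ (k + 1)))
      = C ((k + 1 : ℕ) : ℂ) * (pderiv (uI n) (qForm n ^ k) * X (uI n) + qForm n ^ k) := by
    rw [dd_q _ _ _ (pderiv_qForm_v hn) k, pderiv_X_self, mul_one]
  have hsq : ∀ i ∈ filt n, pderiv i (pderiv i (qForm n ^ (k + 1)))
      = C ((k + 1 : ℕ) : ℂ)
          * (pderiv i (qForm n ^ k) * (C 2 * X i) + qForm n ^ k * C 2) := by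
    intro i hi
    rw [dd_q _ _ _ (pderiv_qForm_sq hi) k, pderiv_C_mul, pderiv_X_self, mul_one]
  rcases k with _ | k'
  · -- k = 0
    rw [huv, Finset.sum_congr rfl hsq]
    simp only [pow_zero, pderiv_one, zero_mul, mul_one, one_mul, zero_add, add_zero]
    rw [Finset.sum_const, nsmul_eq_mul]
    simp only [smul_eq_C_mul, map_natCast, map_ofNat, Nat.cast_one, map_one]
    push_cast
    ring
  · -- k = k' + 1
    have hpd : ∀ j : Fin (n+1), pderiv j (qForm n ^ (k' + 1))
        = C ((k' + 1 : ℕ) : ℂ) * (qForm n ^ k' * pderiv j (qForm n)) := by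
      intro j
      rw [pderiv_pow, map_natCast C (k'+1)]
      push_cast
      ring
    have hexp : ∀ i ∈ filt n, C (((k' + 1) + 1 : ℕ) : ℂ)
          * (pderiv i (qForm n ^ (k' + 1)) * (C 2 * X i) + qForm n ^ (k' + 1) * C 2)
        = (C (((k'+2) * (k'+1) * 4 : ℕ) : ℂ) * qForm n ^ k') * (X i ^ 2)
            + C (((k'+2) * 2 : ℕ) : ℂ) * qForm n ^ (k' + 1) := by
      intro i hi
      rw [hpd i, pderiv_qForm_sq hi]
      simp only [map_natCast, map_ofNat]
      push_cast
      ring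
    rw [huv, Finset.sum_congr rfl hsq, Finset.sum_congr rfl hexp, Finset.sum_add_distrib,
      ← Finset.mul_sum, Finset.sum_const, sum_sq_filt, hpd (uI n), pderiv_qForm_u hn]
    rw [smul_eq_C_mul, smul_eq_C_mul, nsmul_eq_mul]
    simp only [map_natCast, map_ofNat]
    push_cast
    ring
lemma reduce_q {n : ℕ} (hn : 1 ≤ n) (k : ℕ) (g : MvC (n + 1))
    (h : apolarAct g (qForm n ^ (k + 1)) = 0) : apolarAct g (qForm n ^ k) = 0 := by
  obtain ⟨m, hm, hΔ⟩ := delta_q hn k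
  have key : apolarAct g ((∑ i ∈ filt n, pderiv i (pderiv i (qForm n ^ (k + 1))))
      + (4 : ℂ) • pderiv (uI n) (pderiv (vI n) (qForm n ^ (k + 1)))) = 0 := by
    rw [apolarAct_add_right, apolarAct_sum_right, apolarAct_smul_right]
    have hz : ∀ a b : Fin (n + 1),
        apolarAct g (pderiv a (pderiv b (qForm n ^ (k + 1)))) = 0 := by
      intro a b
      rw [← apolarAct_pderiv, ← apolarAct_pderiv, h, map_zero, map_zero]
    rw [Finset.sum_eq_zero (fun i _ => hz i i), hz, smul_zero, add_zero]
  rw [hΔ, apolarAct_smul_right, smul_eq_zero] at key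
  rcases key with hc | hk
  · exact absurd hc (by exact_mod_cast hm.ne')
  · exact hk

lemma step_q {n : ℕ} (hn : 1 ≤ n) (k : ℕ) (g : MvC (n + 1))
    (h1 : apolarAct g (qForm n ^ (k + 1)) = 0)
    (h0 : apolarAct g (qForm n ^ k) = 0) (j : Fin (n + 1)) :
    apolarAct (pderiv j g) (qForm n ^ k) = 0 := by
  -- first: for every i, apolarAct g (pderiv i (q^{k+1})) = 0
  have hz : ∀ i : Fin (n + 1), apolarAct g (pderiv i (qForm n ^ (k + 1))) = 0 := by
    intro i
    rw [← apolarAct_pderiv, h1, map_zero]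
  -- main claim: apolarAct g (X j * q^k) = 0
  have hXj : apolarAct g (X j * qForm n ^ k) = 0 := by
    have key : ∀ i : Fin (n + 1), ∀ c : ℂ, c ≠ 0 →
        pderiv i (qForm n) = C c * X j → apolarAct g (X j * qForm n ^ k) = 0 := by
      intro i c hc hpdi
      have := hz i
      rw [pderiv_pow, hpdi] at this
      have he : ((k + 1 : ℕ) : MvC (n + 1)) * qForm n ^ (k + 1 - 1) * (C c * X j)
          = (((k + 1 : ℕ) : ℂ) * c) • (X j * qForm n ^ k) := by
        rw [smul_eq_C_mul, map_mul, map_natCast C, Nat.add_sub_cancel]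
        ring
      rw [he, apolarAct_smul_right, smul_eq_zero] at this
      rcases this with h' | h'
      · exact absurd h' (by
          simp only [ne_eq, mul_eq_zero, not_or]
          exact ⟨by exact_mod_cast (Nat.succ_ne_zero k), hc⟩)
      · exact h'
    have hcases : ((j : ℕ) + 2 ≤ n) ∨ j = uI n ∨ j = vI n := by
      have hj := j.isLt
      rcases Nat.lt_or_ge ((j : ℕ) + 2) (n + 1) with h' | h'
      · exact Or.inl (by omega)
      · rcases Nat.eq_or_lt_of_le h' with h'' | h''
        · exact Or.inr (Or.inl (Fin.ext (by simp [uI]; omega)))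
        · exact Or.inr (Or.inr (Fin.ext (by simp [vI]; omega)))
    rcases hcases with hj | rfl | rfl
    · exact key j 2 two_ne_zero (pderiv_qForm_sq (by simp [filt]; omega))
    · refine key (vI n) 1 one_ne_zero ?_
      rw [pderiv_qForm_v hn, map_one, one_mul]
    · refine key (uI n) 1 one_ne_zero ?_
      rw [pderiv_qForm_u hn, map_one, one_mul]
  rw [apolarAct_X_mul, h0, mul_zero, zero_add] at hXj
  exact hXj
lemma degree_eq_sum_univ {N : ℕ} (s : Fin N →₀ ℕ) :
    s.degree = ∑ i, s i := by
  rw [Finsupp.degree]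
  exact Finset.sum_subset (Finset.subset_univ _)
    (fun i _ hi => Finsupp.notMem_support_iff.mp hi)

lemma support_degree {N d : ℕ} {g : MvC N} (hg : g.IsHomogeneous d)
    {s : Fin N →₀ ℕ} (hs : s ∈ g.support) : s.degree = d := by
  by_contra hne
  exact (MvPolynomial.mem_support_iff.mp hs) (hg.coeff_eq_zero hne)

lemma X_mul_pderiv_monomial {N : ℕ} (i : Fin N) (s : Fin N →₀ ℕ) (c : ℂ) :
    X i * pderiv i (monomial s c) = monomial s (c * ((s i : ℕ) : ℂ)) := by
  rw [pderiv_monomial]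
  rcases Nat.eq_zero_or_pos (s i) with h0 | hpos
  · rw [h0]; simp
  · rw [X, monomial_mul, one_mul]
    have hadd : Finsupp.single i 1 + (s - Finsupp.single i 1) = s := by
      ext j
      rcases eq_or_ne j i with rfl | hji
      · simp only [Finsupp.add_apply, Finsupp.tsub_apply, Finsupp.single_eq_same]
        omega
      · simp [Finsupp.single_apply, hji.symm, Finsupp.tsub_apply]
    rw [hadd]

lemma euler_identity {N d : ℕ} {g : MvC N} (hg : g.IsHomogeneous d) :
    ∑ i, X i * pderiv i g = ((d : ℕ) : ℂ) • g := by
  conv_lhs => rw [g.as_sum]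
  have hswap : ∀ i : Fin N, X i * pderiv i (∑ s ∈ g.support, monomial s (coeff s g))
      = ∑ s ∈ g.support, monomial s (coeff s g * ((s i : ℕ) : ℂ)) := by
    intro i
    rw [map_sum, Finset.mul_sum]
    exact Finset.sum_congr rfl fun s _ => X_mul_pderiv_monomial i s _
  rw [Finset.sum_congr rfl (fun i _ => hswap i), Finset.sum_comm]
  conv_rhs => rw [g.as_sum]
  rw [Finset.smul_sum]
  refine Finset.sum_congr rfl fun s hs => ?_
  rw [← map_sum (monomial s), ← Finset.mul_sum]
  have hsum : (∑ i, ((s i : ℕ) : ℂ)) = ((d : ℕ) : ℂ) := by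
    rw [← Nat.cast_sum, ← degree_eq_sum_univ, support_degree hg hs]
  rw [hsum, smul_monomial, smul_eq_mul, mul_comm]

lemma isHomogeneous_pderiv {N d : ℕ} {g : MvC N} (hg : g.IsHomogeneous (d + 1))
    (i : Fin N) : (pderiv i g).IsHomogeneous d := by
  have hrw : pderiv i g
      = ∑ s ∈ g.support, monomial (s - Finsupp.single i 1) (coeff s g * ((s i : ℕ) : ℂ)) := by
    conv_lhs => rw [g.as_sum]
    rw [map_sum]
    exact Finset.sum_congr rfl fun s _ => pderiv_monomial
  rw [hrw]
  refine IsHomogeneous.sum _ _ _ fun s hs => ?_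
  rcases Nat.eq_zero_or_pos (s i) with h0 | hpos
  · rw [h0]
    simp only [Nat.cast_zero, mul_zero, monomial_zero]
    exact isHomogeneous_zero _ _ _
  · refine isHomogeneous_monomial _ ?_
    have hd : (∑ j ∈ Finset.univ.erase i, s j) + s i = d + 1 := by
      rw [Finset.sum_erase_add _ _ (Finset.mem_univ i), ← degree_eq_sum_univ]
      exact support_degree hg hs
    rw [degree_eq_sum_univ, ← Finset.sum_erase_add _ _ (Finset.mem_univ i)]
    have he : ∀ j ∈ Finset.univ.erase i, ((s - Finsupp.single i 1 : Fin N →₀ ℕ)) j = s j := by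
      intro j hj
      have hji : j ≠ i := (Finset.mem_erase.mp hj).1
      simp [Finsupp.tsub_apply, Finsupp.single_apply, hji.symm]
    rw [Finset.sum_congr rfl he]
    have hi : ((s - Finsupp.single i 1 : Fin N →₀ ℕ)) i = s i - 1 := by
      simp [Finsupp.tsub_apply]
    rw [hi]
    have hd' : (Finset.univ.erase i).sum ⇑s + s i = d + 1 := hd
    omega

lemma isHomogeneous_zero_C {N : ℕ} {g : MvC N} (hg : g.IsHomogeneous 0) :
    g = C (coeff 0 g) := by
  ext m
  rcases eq_or_ne m 0 with rfl | hm
  · simp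
  · rw [hg.coeff_eq_zero (by rwa [ne_eq, Finsupp.degree_eq_zero_iff]), coeff_C,
      if_neg (fun h => hm h.symm)]
lemma main_apolar {n : ℕ} (hn : 1 ≤ n) :
    ∀ d r : ℕ, ∀ g : MvC (n + 1), d ≤ r → g.IsHomogeneous d →
      apolarAct g (qForm n ^ r) = 0 → g = 0 := by
  intro d
  induction d with
  | zero =>
    intro r g _ hg h
    rw [isHomogeneous_zero_C hg] at h ⊢
    rw [apolarAct_C, smul_eq_zero] at h
    rcases h with h | h
    · rw [h, map_zero]
    · exact absurd h (q_pow_ne_zero hn r)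
  | succ d ih =>
    intro r g hdr hg h
    obtain ⟨m, rfl⟩ : ∃ m, r = m + 1 := ⟨r - 1, by omega⟩
    have h0 : apolarAct g (qForm n ^ m) = 0 := reduce_q hn m g h
    have hpd : ∀ j, pderiv j g = 0 := fun j =>
      ih m (pderiv j g) (by omega) (isHomogeneous_pderiv hg j) (step_q hn m g h h0 j)
    have he := euler_identity hg
    rw [Finset.sum_congr rfl (fun j (_ : j ∈ Finset.univ) => by
      rw [hpd j, mul_zero]), Finset.sum_const_zero] at he
    have hne : ((d + 1 : ℕ) : ℂ) ≠ 0 := by exact_mod_cast Nat.succ_ne_zero d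
    exact (smul_eq_zero.mp he.symm).resolve_left hne

/-- The apolar ideal `(q^r)^⊥` contains no nonzero form of degree `1 ≤ d ≤ r`, and the
iterated partials `∂^α(q^r)` with `|α| = d` are linearly independent for every `d ≤ r`. -/
theorem statement1 (n r : ℕ) (hn : 1 ≤ n) (hr : 1 ≤ r) :
    (∀ d : ℕ, 1 ≤ d → d ≤ r →
      ∀ g : MvPolynomial (Fin (n + 1)) ℂ, g.IsHomogeneous d →
        apolarAct g (qForm n ^ r) = 0 → g = 0) ∧
    (∀ d : ℕ, d ≤ r →
      LinearIndependent ℂ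
        (fun α : {α : Fin (n + 1) →₀ ℕ // (∑ i, α i) = d} =>
          pdPow α.1 (qForm n ^ r))) := by
  constructor
  · exact fun d _ hdr g hg h => main_apolar hn d r g hdr hg h
  · intro d hdr
    rw [linearIndependent_iff']
    intro s c hsum a ha
    set G : {α : Fin (n + 1) →₀ ℕ // (∑ i, α i) = d} → MvC (n + 1) :=
      fun b => monomial b.1 (c b) with hG
    have hg : apolarAct (∑ b ∈ s, G b) (qForm n ^ r) = 0 := by
      rw [apolarAct_sum_left,
        Finset.sum_congr rfl (fun b (_ : b ∈ s) => apolarAct_monomial b.1 (c b) _)]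
      exact hsum
    have hhom : (∑ b ∈ s, G b).IsHomogeneous d :=
      IsHomogeneous.sum _ _ _ fun b _ =>
        isHomogeneous_monomial _ (by rw [degree_eq_sum_univ]; exact b.2)
    have hz : (∑ b ∈ s, G b) = 0 := main_apolar hn d r _ hdr hhom hg
    have hcoeff : coeff a.1 (∑ b ∈ s, G b) = c a := by
      rw [coeff_sum]
      rw [Finset.sum_eq_single a (fun b _ hb => by
        rw [hG]
        rw [coeff_monomial, if_neg (fun h => hb (Subtype.ext h))])
        (fun h => absurd ha h)]
      rw [hG, coeff_monomial, if_pos rfl]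
    rw [hz] at hcoeff
    simpa using hcoeff.symm
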